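/- Let A be a unital C*-algebra, let y₀, y₁ ∈ A be positive elements with y₀ y₁ = y₁, and let p ∈ A be a projection. Suppose there is w₀ ∈ A with ‖w₀* y₁ w₀ − p‖ < 1. Then there exists v ∈ A such that ‖v‖ ≤ 1 and v* y₀ v = p. -/

import Mathlib

section CommuteCfc
variable {A : Type*} [CStarAlgebra A]

lemma commute_aeval (x a : A) (h : Commute x a) (q : Polynomial ℝ) :
    Commute x (Polynomial.aeval a q) := by
  induction q using Polynomial.induction_on with
  | C r => simpa using Algebra.commute_algebraMap_right r x
  | add p q hp hq => simpa [map_add] using hp.add_right hq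
  | monomial n r _ =>
      simp only [map_mul, map_pow, Polynomial.aeval_C, Polynomial.aeval_X]
      exact (Algebra.commute_algebraMap_right r x).mul_right (h.pow_right _)

lemma commute_cfc (x a : A) (ha : IsSelfAdjoint a) (h : Commute x a) (f : ℝ → ℝ) :
    Commute x (cfc f a) := by
  by_cases hf : ContinuousOn f (spectrum ℝ a)
  · rw [cfc_apply f a ha hf]
    have key : ∀ g : C(spectrum ℝ a, ℝ), Commute x (cfcHom ha g) := by
      have hclosed : IsClosed {y : A | x * y = y * x} :=
        isClosed_eq (continuous_const.mul continuous_id) (continuous_id.mul continuous_const)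
      have hS : IsClosed ((cfcHom ha (R := ℝ)) ⁻¹' {y : A | x * y = y * x}) :=
        hclosed.preimage (cfcHom_continuous ha)
      have hsub : (polynomialFunctions (spectrum ℝ a) : Set C(spectrum ℝ a, ℝ)) ⊆
          (cfcHom ha (R := ℝ)) ⁻¹' {y : A | x * y = y * x} := by
        rw [polynomialFunctions_coe]
        rintro _ ⟨q, rfl⟩
        have heq : cfcHom ha (Polynomial.toContinuousMapOnAlgHom (spectrum ℝ a) q) =
            Polynomial.aeval a q := by
          have h1 := cfc_polynomial (R := ℝ) q a ha
          rw [cfc_apply (fun y => q.eval y) a ha (q.continuous_aeval.continuousOn)] at h1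
          rw [← h1]
          congr 1
        show x * _ = _ * x
        rw [heq]
        exact commute_aeval x a h q
      intro g
      have hg : g ∈ closure (polynomialFunctions (spectrum ℝ a) : Set C(spectrum ℝ a, ℝ)) := by
        rw [← Subalgebra.topologicalClosure_coe,
          polynomialFunctions.topologicalClosure (spectrum ℝ a)]
        trivial
      exact closure_minimal hsub hS hg
    exact key _
  · rw [cfc_apply_of_not_continuousOn a hf]
    exact Commute.zero_right x

end CommuteCfc

/-- Let `A` be a unital C*-algebra, let `y₀, y₁ ∈ A` be positive with `y₀ y₁ = y₁`, and let
`p ∈ A` be a projection.  If there is `w₀ ∈ A` with `‖w₀* y₁ w₀ − p‖ < 1`, then there exists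
`v ∈ A` with `‖v‖ ≤ 1` and `v* y₀ v = p`. -/
theorem exists_contraction_conj_eq_projection
    {A : Type*} [NormedRing A] [StarRing A] [CStarRing A] [CompleteSpace A]
    [NormedAlgebra ℂ A] [StarModule ℂ A] [PartialOrder A] [StarOrderedRing A]
    (y₀ y₁ : A) (hy₀ : 0 ≤ y₀) (hy₁ : 0 ≤ y₁) (hmul : y₀ * y₁ = y₁)
    (p : A) (hp_sa : IsSelfAdjoint p) (hp_idem : p * p = p)
    (w₀ : A) (hw₀ : ‖star w₀ * y₁ * w₀ - p‖ < 1) :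
    ∃ v : A, ‖v‖ ≤ 1 ∧ star v * y₀ * v = p := by
  letI : CStarAlgebra A := { }
  set s := CFC.sqrt y₁ with hs
  have hs_nonneg : 0 ≤ s := CFC.sqrt_nonneg (a := y₁)
  have hs_sa : IsSelfAdjoint s := hs_nonneg.isSelfAdjoint
  have hy₀_sa : IsSelfAdjoint y₀ := hy₀.isSelfAdjoint
  have hs2 : s * s = y₁ := by rw [hs, ← pow_two]; exact CFC.sq_sqrt y₁ hy₁
  -- `y₀` acts as the identity on `s = √y₁`
  have h1 : (y₀ - 1) * y₁ = 0 := by rw [sub_mul, one_mul, hmul, sub_self]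
  have h2 : (y₀ - 1) * s = 0 := by
    have hsa : IsSelfAdjoint (y₀ - 1) := hy₀_sa.sub (IsSelfAdjoint.one A)
    have hx : ((y₀ - 1) * s) * star ((y₀ - 1) * s) = 0 := by
      rw [star_mul, hs_sa.star_eq, hsa.star_eq]
      calc (y₀ - 1) * s * (s * (y₀ - 1)) = ((y₀ - 1) * (s * s)) * (y₀ - 1) := by
            simp only [mul_assoc]
        _ = 0 := by rw [hs2, h1, zero_mul]
    have hnorm : ‖(y₀ - 1) * s‖ * ‖(y₀ - 1) * s‖ = 0 := by
      rw [← CStarRing.norm_self_mul_star, hx, norm_zero]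
    have : ‖(y₀ - 1) * s‖ = 0 := by nlinarith [norm_nonneg ((y₀ - 1) * s)]
    exact norm_eq_zero.mp this
  have hy₀s : y₀ * s = s := by
    have := h2; rw [sub_mul, one_mul, sub_eq_zero] at this; exact this
  have hsy₀ : s * y₀ = s := by
    have := congrArg star hy₀s
    rwa [star_mul, hs_sa.star_eq, hy₀_sa.star_eq] at this
  have key : s * y₀ * s = y₁ := by rw [hsy₀, hs2]
  set z := star w₀ * y₁ * w₀ with hz
  set b := p * z * p with hb
  have hb_eq : star (s * (w₀ * p)) * (s * (w₀ * p)) = b := by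
    simp only [hb, hz, star_mul, hs_sa.star_eq, hp_sa.star_eq, ← hs2, mul_assoc]
  have hb_nonneg : 0 ≤ b := hb_eq ▸ star_mul_self_nonneg _
  have hq_nonneg : 0 ≤ (1 : A) - p := by
    have h1p : IsSelfAdjoint ((1 : A) - p) := (IsSelfAdjoint.one A).sub hp_sa
    have hqq : star ((1 : A) - p) * ((1 : A) - p) = (1 : A) - p := by
      rw [h1p.star_eq, sub_mul, mul_sub, mul_sub, mul_one, one_mul, mul_one, hp_idem]
      abel
    exact hqq ▸ star_mul_self_nonneg ((1 : A) - p)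
  set d := b + ((1 : A) - p) with hd
  have hd_nonneg : 0 ≤ d := add_nonneg hb_nonneg hq_nonneg
  have hd_sa : IsSelfAdjoint d := hd_nonneg.isSelfAdjoint
  have hp_norm : ‖p‖ ≤ 1 := by
    rcases eq_or_ne p 0 with h | h
    · simp [h]
    · have h1 := CStarRing.norm_star_mul_self (x := p)
      rw [hp_sa.star_eq, hp_idem] at h1
      nlinarith [norm_pos_iff.mpr h]
  have hbp : p * (z - p) * p = b - p := by
    rw [mul_sub, sub_mul, hb, hp_idem, hp_idem]
  have h1d : ‖(1 : A) - d‖ < 1 := by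
    have heq : (1 : A) - d = -(p * (z - p) * p) := by
      rw [hbp, hd]; abel
    rw [heq, norm_neg]
    calc ‖p * (z - p) * p‖ ≤ ‖p * (z - p)‖ * ‖p‖ := norm_mul_le _ _
      _ ≤ ‖p‖ * ‖z - p‖ * ‖p‖ :=
          mul_le_mul_of_nonneg_right (norm_mul_le _ _) (norm_nonneg _)
      _ ≤ 1 * ‖z - p‖ * 1 := by gcongr
      _ = ‖z - p‖ := by ring
      _ < 1 := by rw [hz]; exact hw₀
  have hd_unit : IsUnit d := by
    have := (Units.oneSub ((1 : A) - d) h1d).isUnit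
    simpa [sub_sub_cancel] using this
  have hspec : ∀ x ∈ spectrum ℝ d, 0 < x := by
    intro x hx
    have hx0 : 0 ≤ x := spectrum_nonneg_of_nonneg hd_nonneg hx
    rcases hx0.lt_or_eq with hlt | hE
    · exact hlt
    · exact absurd (hE ▸ hx) (spectrum.zero_notMem ℝ hd_unit)
  set f : ℝ → ℝ := fun x => (Real.sqrt x)⁻¹ with hf
  have hf_cont : ContinuousOn f (spectrum ℝ d) := by
    apply ContinuousOn.inv₀ Real.continuous_sqrt.continuousOn
    exact fun x hx => ne_of_gt (Real.sqrt_pos.mpr (hspec x hx))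
  set c := cfc f d with hc
  have hc_sa : IsSelfAdjoint c := cfc_predicate f d
  have hcdc : c * d * c = 1 := by
    have e1 : cfc (fun x : ℝ => f x * x) d = c * d := by
      have h' := cfc_mul f (fun x : ℝ => x) d hf_cont continuousOn_id
      rwa [cfc_id' ℝ d hd_sa] at h'
    have e2 : cfc (fun x : ℝ => (f x * x) * f x) d = cfc (fun x : ℝ => f x * x) d * c :=
      cfc_mul _ _ d (hf_cont.mul continuousOn_id) hf_cont
    have e3 : cfc (fun x : ℝ => (f x * x) * f x) d = 1 := by
      have : cfc (fun x : ℝ => (f x * x) * f x) d = cfc (fun _ : ℝ => (1 : ℝ)) d := by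
        apply cfc_congr
        intro x hx
        have hx0 : 0 < x := hspec x hx
        have hsq : Real.sqrt x * Real.sqrt x = x := Real.mul_self_sqrt hx0.le
        have hsne : Real.sqrt x ≠ 0 := ne_of_gt (Real.sqrt_pos.mpr hx0)
        simp only [hf]; rw [mul_comm, ← mul_assoc, ← mul_inv, hsq, inv_mul_cancel₀ hx0.ne']
      rw [this]
      exact cfc_one ℝ d
    rw [← e1, ← e2, e3]
  -- `p` commutes with `d`, hence with `c`
  have hpb : p * b = b := by
    rw [hb, ← mul_assoc, ← mul_assoc, hp_idem]
  have hbp2 : b * p = b := by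
    rw [hb, mul_assoc, hp_idem]
  have hcomm_pd : Commute p d := by
    show p * d = d * p
    rw [hd, mul_add, add_mul, hpb, hbp2, mul_sub, sub_mul, mul_one, one_mul]
  have hdp : d * p = b := by
    rw [hd, add_mul, sub_mul, hbp2, one_mul, hp_idem, sub_self, add_zero]
  have hcomm : Commute p c := commute_cfc p d hd_sa hcomm_pd f
  refine ⟨s * (w₀ * (p * c)), ?_, ?_⟩
  · -- norm bound, via `star v * v = p`
    have hv_star : star (s * (w₀ * (p * c))) = c * p * star w₀ * s := by
      simp only [star_mul, hs_sa.star_eq, hp_sa.star_eq, hc_sa.star_eq]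
    have hvv : star (s * (w₀ * (p * c))) * (s * (w₀ * (p * c))) = p := by
      calc star (s * (w₀ * (p * c))) * (s * (w₀ * (p * c)))
          = (c * p * star w₀) * (s * s) * (w₀ * (p * c)) := by
            rw [hv_star]; simp only [mul_assoc]
        _ = c * b * c := by rw [hs2, hb, hz]; simp only [mul_assoc]
        _ = c * (d * p) * c := by rw [hdp]
        _ = c * d * c * p := by
            simp only [mul_assoc]; rw [hcomm.eq]
        _ = p := by rw [hcdc, one_mul]
    have hnv : ‖s * (w₀ * (p * c))‖ * ‖s * (w₀ * (p * c))‖ = ‖p‖ := by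
      rw [← CStarRing.norm_star_mul_self, hvv]
    nlinarith [norm_nonneg (s * (w₀ * (p * c)))]
  · have hv_star : star (s * (w₀ * (p * c))) = c * p * star w₀ * s := by
      simp only [star_mul, hs_sa.star_eq, hp_sa.star_eq, hc_sa.star_eq]
    calc star (s * (w₀ * (p * c))) * y₀ * (s * (w₀ * (p * c)))
        = (c * p * star w₀) * (s * y₀ * s) * (w₀ * (p * c)) := by
          rw [hv_star]; simp only [mul_assoc]
      _ = c * b * c := by rw [key, hb, hz]; simp only [mul_assoc]
      _ = c * (d * p) * c := by rw [hdp]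
      _ = c * d * c * p := by
          simp only [mul_assoc]; rw [hcomm.eq]
      _ = p := by rw [hcdc, one_mul]
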